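/- For every partial Boolean function f : Dom(f) → {0,1} with Dom(f) ⊆ {0,1}^n, randomized sabotage complexity upper bounds randomized certificate complexity up to a factor 4: RS(f) ≥ RC(f)/4. -/

import Mathlib

/-! ### Decision trees -/

/-- A deterministic decision tree querying positions of type `ι`, receiving answers
in `α`, and producing an output in `β`. -/
inductive DTree (ι α β : Type) : Type
  | leaf (b : β) : DTree ι α β
  | node (i : ι) (next : α → DTree ι α β) : DTree ι α β

namespace DTree

variable {ι α β : Type}

/-- The output of a decision tree on input `x`. -/
def output : DTree ι α β → (ι → α) → β
  | leaf b, _ => b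
  | node i next, x => (next (x i)).output x

/-- The number of queries made by a decision tree on input `x`. -/
def cost : DTree ι α β → (ι → α) → ℕ
  | leaf _, _ => 0
  | node i next, x => (next (x i)).cost x + 1

/-- The set of positions queried by a decision tree on input `x`. -/
def queries : DTree ι α β → (ι → α) → Set ι
  | leaf _, _ => ∅
  | node i next, x => insert i ((next (x i)).queries x)

end DTree

/-- A partial function on inputs `ι → α` with outputs in `β`; `none` means undefined
(the domain is the set of inputs mapped to `some` value). -/
abbrev PFn (ι α β : Type) := (ι → α) → Option β

/-- `t` computes the partial function `f` (correct on every input of the domain). -/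
def DTree.computesP {ι α β : Type} (t : DTree ι α β) (f : PFn ι α β) : Prop :=
  ∀ x b, f x = some b → t.output x = b

/-- Deterministic query complexity `D(f)`. -/
noncomputable def Dq {ι α β : Type} (f : PFn ι α β) : ℝ :=
  sInf {T : ℝ | 0 ≤ T ∧ ∃ t : DTree ι α β, t.computesP f ∧ ∀ x, (t.cost x : ℝ) ≤ T}

/-! ### Randomized query algorithms -/

/-- A randomized query algorithm: a finitely supported probability distribution over
deterministic decision trees. -/
structure RandAlg (ι α β : Type) where
  Ω : Type
  [fin : Fintype Ω]
  p : Ω → ℝ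
  nonneg : ∀ ω, 0 ≤ p ω
  sum_one : ∑ ω, p ω = 1
  tree : Ω → DTree ι α β

namespace RandAlg

variable {ι α β : Type}

/-- Expected number of queries of `A` on input `x`. -/
noncomputable def expCost (A : RandAlg ι α β) (x : ι → α) : ℝ :=
  letI := A.fin
  ∑ ω, A.p ω * ((A.tree ω).cost x : ℝ)

open Classical in
/-- Probability that `A` outputs `b` on input `x`. -/
noncomputable def succProb (A : RandAlg ι α β) (x : ι → α) (b : β) : ℝ :=
  letI := A.fin
  ∑ ω, if (A.tree ω).output x = b then A.p ω else 0

/-- `A` computes `f` with error at most `ε`: on every input of the domain the correct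
output is produced with probability at least `1 - ε`. -/
def Computes (A : RandAlg ι α β) (f : PFn ι α β) (ε : ℝ) : Prop :=
  ∀ x b, f x = some b → 1 - ε ≤ A.succProb x b

/-- The worst-case cost of `A` (over all inputs and all trees in the support) is at most `T`. -/
def WCostLe (A : RandAlg ι α β) (T : ℝ) : Prop :=
  ∀ ω, A.p ω ≠ 0 → ∀ x, ((A.tree ω).cost x : ℝ) ≤ T

/-- The expected cost of `A` on every input of the domain of `f` is at most `T`. -/
def ECostLe (A : RandAlg ι α β) (f : PFn ι α β) (T : ℝ) : Prop :=
  ∀ x, (f x).isSome → A.expCost x ≤ T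

end RandAlg

/-- `R_ε(f)`: minimum worst-case cost of an `ε`-error randomized algorithm for `f`. -/
noncomputable def Rw {ι α β : Type} (ε : ℝ) (f : PFn ι α β) : ℝ :=
  sInf {T : ℝ | 0 ≤ T ∧ ∃ A : RandAlg ι α β, A.Computes f ε ∧ A.WCostLe T}

/-- `R̄_ε(f)`: minimum expected cost of an `ε`-error randomized algorithm for `f`. -/
noncomputable def Rbar {ι α β : Type} (ε : ℝ) (f : PFn ι α β) : ℝ :=
  sInf {T : ℝ | 0 ≤ T ∧ ∃ A : RandAlg ι α β, A.Computes f ε ∧ A.ECostLe f T}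

/-- `R₀(f)`: zero-error expected randomized query complexity. -/
noncomputable def R0 {ι α β : Type} (f : PFn ι α β) : ℝ := Rbar 0 f

/-- `R(f) := R_{1/3}(f)`: bounded-error randomized query complexity. -/
noncomputable def Rb {ι α β : Type} (f : PFn ι α β) : ℝ := Rw (1/3) f

/-- The total function `f` viewed as a partial function. -/
def tot {ι α β : Type} (f : (ι → α) → β) : PFn ι α β := fun x => some (f x)


/-! ### Sabotage complexity and composition -/

/-- The four-letter alphabet `{0, 1, *, †}` of sabotaged inputs. -/
inductive Sab : Type
  | zero : Sab
  | one : Sab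
  | star : Sab
  | dagger : Sab
deriving DecidableEq

/-- Embedding of Boolean values into the sabotage alphabet. -/
def Sab.ofBool : Bool → Sab
  | false => Sab.zero
  | true => Sab.one

/-- `p` is consistent with the Boolean input `x`: wherever `p` has a Boolean entry,
it agrees with `x`. -/
def SabConsistent {ι : Type} (p : ι → Sab) (x : ι → Bool) : Prop :=
  ∀ i, p i = Sab.ofBool (x i) ∨ p i = Sab.star ∨ p i = Sab.dagger

/-- `p` is a sabotaged input for `f` using the sabotage symbol `s`: all entries of `p`
lie in `{0, 1, s}` and `p` is consistent with both a `0`-input and a `1`-input of `f`. -/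
def IsSabotaged {ι : Type} (f : PFn ι Bool Bool) (s : Sab) (p : ι → Sab) : Prop :=
  (∀ i, p i = Sab.zero ∨ p i = Sab.one ∨ p i = s) ∧
  ∃ x y, (f x).isSome ∧ (f y).isSome ∧ f x ≠ f y ∧ SabConsistent p x ∧ SabConsistent p y

open Classical in
/-- The sabotage problem `f_sab` associated with `f`: it is `0` on `P_f` (inputs
sabotaged with `*`) and `1` on `P_f†` (inputs sabotaged with `†`). -/
noncomputable def fsab {ι : Type} (f : PFn ι Bool Bool) : PFn ι Sab Bool :=
  fun p =>
    if IsSabotaged f Sab.star p then some false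
    else if IsSabotaged f Sab.dagger p then some true
    else none

open Classical in
/-- `f_usab`: the restriction of `f_sab` to inputs having exactly one `*` or `†` entry. -/
noncomputable def fusab {ι : Type} (f : PFn ι Bool Bool) : PFn ι Sab Bool :=
  fun p =>
    if ∃! i, p i = Sab.star ∨ p i = Sab.dagger then fsab f p else none

/-- Randomized sabotage complexity `RS(f) := R₀(f_sab)`. -/
noncomputable def RS {ι : Type} (f : PFn ι Bool Bool) : ℝ := R0 (fsab f)

/-- `RS_u(f) := R₀(f_usab)` (this is `0` automatically when `f_usab` has empty domain). -/
noncomputable def RSu {ι : Type} (f : PFn ι Bool Bool) : ℝ := R0 (fusab f)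

open Classical in
/-- Composition `f ∘ g` of partial functions: defined on an input exactly when every
inner copy of `g` is defined and the tuple of inner values lies in the domain of `f`. -/
noncomputable def pcomp {κ ι α β γ : Type} (f : PFn κ β γ) (g : PFn ι α β) :
    PFn (κ × ι) α γ :=
  fun x =>
    if h : ∀ i : κ, (g fun j => x (i, j)).isSome then
      f fun i => (g fun j => x (i, j)).get (h i)
    else none

/-- Index types for iterated self-composition. -/
def IterIdx (κ : Type) : ℕ → Type
  | 0 => κ
  | n + 1 => κ × IterIdx κ n

/-- `iterComp f n` is `f` composed with itself `n + 1` times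
(`iterComp f 0 = f`, `iterComp f (n+1) = f ∘ iterComp f n`). -/
noncomputable def iterComp {κ : Type} (f : PFn κ Bool Bool) : (n : ℕ) → PFn (IterIdx κ n) Bool Bool
  | 0 => f
  | n + 1 => pcomp f (iterComp f n)

/-! ### The index function -/

/-- The value of a bit-string read as a binary number (bit `i` has weight `2^i`). -/
def binval {b : ℕ} (x : Fin b → Bool) : ℕ := ∑ i, if x i then 2 ^ (i : ℕ) else 0

theorem sum_range_two_pow (b : ℕ) : ∑ i ∈ Finset.range b, 2 ^ i = 2 ^ b - 1 := by
  induction b with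
  | zero => simp
  | succ n ih =>
    rw [Finset.sum_range_succ, ih, pow_succ]
    have : 1 ≤ 2 ^ n := Nat.one_le_two_pow
    omega

theorem binval_lt {b : ℕ} (x : Fin b → Bool) : binval x < 2 ^ b := by
  have h1 : binval x ≤ ∑ i : Fin b, 2 ^ (i : ℕ) := by
    refine Finset.sum_le_sum fun i _ => ?_
    split <;> simp
  have h2 : ∑ i : Fin b, 2 ^ (i : ℕ) = 2 ^ b - 1 := by
    rw [Fin.sum_univ_eq_sum_range (fun i => 2 ^ i) b]
    exact sum_range_two_pow b
  have h3 : 0 < 2 ^ b := Nat.pow_pos (by norm_num)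
  omega

/-- The largest `c` with `c + 2^c ≤ m`. -/
def indexC (m : ℕ) : ℕ := Nat.findGreatest (fun c => c + 2 ^ c ≤ m) m

/-- The index function `Ind_m : {0,1}^m → {0,1}`: the first `c` bits (where `c` is the
largest integer with `c + 2^c ≤ m`) are read as a binary address `y` into the next
`2^c` bits, and the output is the addressed bit. -/
def IndFn (m : ℕ) : PFn (Fin m) Bool Bool :=
  fun x =>
    let c := indexC m
    let y := ∑ i : Fin m, if (i : ℕ) < c ∧ x i = true then 2 ^ (i : ℕ) else 0
    if h : c + y < m then some (x ⟨c + y, h⟩) else none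

/-- `f^{⊕c}_ind`: the index function on `c + 2^c` bits with `f` composed into each of
the `c` address bits only. -/
def findex {n : ℕ} (f : PFn (Fin n) Bool Bool) (c : ℕ) :
    PFn ((Fin c × Fin n) ⊕ Fin (2 ^ c)) Bool Bool :=
  fun x =>
    if h : ∀ i : Fin c, (f fun j => x (Sum.inl (i, j))).isSome then
      some (x (Sum.inr ⟨binval fun i => (f fun j => x (Sum.inl (i, j))).get (h i),
        binval_lt _⟩))
    else none

/-! ### Randomized certificate complexity (fractional block sensitivity) -/

/-- `x` with the bits indexed by the block `B` flipped. -/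
def flipB {n : ℕ} (x : Fin n → Bool) (B : Finset (Fin n)) : Fin n → Bool :=
  fun i => if i ∈ B then !(x i) else x i

/-- `B` is a sensitive block for `x` with respect to `f`. -/
def SensBlock {n : ℕ} (f : PFn (Fin n) Bool Bool) (x : Fin n → Bool)
    (B : Finset (Fin n)) : Prop :=
  (f x).isSome ∧ (f (flipB x B)).isSome ∧ f (flipB x B) ≠ f x

/-- `RC_x(f)`: the maximum total weight of a fractionally disjoint set of sensitive
blocks of `x`, i.e. of nonnegative weights on the sensitive blocks such that every
coordinate is covered with total weight at most `1`. -/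
noncomputable def RCx {n : ℕ} (f : PFn (Fin n) Bool Bool) (x : Fin n → Bool) : ℝ :=
  sSup {W : ℝ | ∃ w : Finset (Fin n) → ℝ,
    (∀ B, 0 ≤ w B) ∧ (∀ B, w B ≠ 0 → SensBlock f x B) ∧
    (∀ i : Fin n, ∑ B : Finset (Fin n), (if i ∈ B then w B else 0) ≤ 1) ∧
    W = ∑ B : Finset (Fin n), w B}

/-- `RC(f)`: randomized certificate complexity of `f`. -/
noncomputable def RC {n : ℕ} (f : PFn (Fin n) Bool Bool) : ℝ :=
  sSup {W : ℝ | ∃ x, (f x).isSome ∧ W = RCx f x}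

/-! ### Auxiliary material for the proof -/

/-- Decision tree that queries all positions in `l` and then outputs `h` of the
reconstructed input. -/
def bigTree {n : ℕ} {α β : Type} (h : (Fin n → α) → β) :
    List (Fin n) → (Fin n → α) → DTree (Fin n) α β
  | [], g => .leaf (h g)
  | i :: l, g => .node i fun a => bigTree h l (Function.update g i a)

lemma bigTree_output {n : ℕ} {α β : Type} (h : (Fin n → α) → β) :
    ∀ (l : List (Fin n)) (g : Fin n → α) (x : Fin n → α),
      (bigTree h l g).output x = h (fun j => if j ∈ l then x j else g j)
  | [], g, x => by
    simp [bigTree, DTree.output]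
  | i :: l, g, x => by
    simp only [bigTree, DTree.output]
    rw [bigTree_output h l]
    congr 1
    funext j
    by_cases hj : j ∈ l
    · simp [hj]
    · by_cases hji : j = i
      · subst hji; simp [hj, Function.update]
      · simp [hj, hji, Function.update]

lemma bigTree_cost {n : ℕ} {α β : Type} (h : (Fin n → α) → β) :
    ∀ (l : List (Fin n)) (g : Fin n → α) (x : Fin n → α),
      (bigTree h l g).cost x = l.length
  | [], g, x => by simp [bigTree, DTree.cost]
  | i :: l, g, x => by
    simp [bigTree, DTree.cost, bigTree_cost h l]

/-- `x` with the block `B` replaced by the symbol `s`. -/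
def sabIn {n : ℕ} (s : Sab) (x : Fin n → Bool) (B : Finset (Fin n)) : Fin n → Sab :=
  fun i => if i ∈ B then s else Sab.ofBool (x i)

lemma fsab_sabIn_star {n : ℕ} (f : PFn (Fin n) Bool Bool) (x : Fin n → Bool)
    (B : Finset (Fin n)) (hB : SensBlock f x B) :
    fsab f (sabIn Sab.star x B) = some false := by
  obtain ⟨h1, h2, h3⟩ := hB
  have hsab : IsSabotaged f Sab.star (sabIn Sab.star x B) := by
    refine ⟨fun i => ?_, x, flipB x B, h1, h2, h3.symm, fun i => ?_, fun i => ?_⟩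
    · by_cases hi : i ∈ B
      · simp [sabIn, hi]
      · simp only [sabIn, hi, if_false]
        cases x i <;> simp [Sab.ofBool]
    · by_cases hi : i ∈ B <;> simp [sabIn, hi]
    · by_cases hi : i ∈ B
      · simp [sabIn, hi]
      · left; simp [sabIn, hi, flipB]
  simp [fsab, hsab]

lemma sensBlock_nonempty {n : ℕ} {f : PFn (Fin n) Bool Bool} {x : Fin n → Bool}
    {B : Finset (Fin n)} (hB : SensBlock f x B) : B.Nonempty := by
  rcases Finset.eq_empty_or_nonempty B with h | h
  · exfalso
    apply hB.2.2
    subst h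
    have he : flipB x ∅ = x := by funext i; simp [flipB]
    rw [he]
  · exact h

lemma fsab_sabIn_dagger {n : ℕ} (f : PFn (Fin n) Bool Bool) (x : Fin n → Bool)
    (B : Finset (Fin n)) (hB : SensBlock f x B) :
    fsab f (sabIn Sab.dagger x B) = some true := by
  obtain ⟨h1, h2, h3⟩ := hB
  have hsab : IsSabotaged f Sab.dagger (sabIn Sab.dagger x B) := by
    refine ⟨fun i => ?_, x, flipB x B, h1, h2, h3.symm, fun i => ?_, fun i => ?_⟩
    · by_cases hi : i ∈ B
      · simp [sabIn, hi]
      · simp only [sabIn, hi, if_false]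
        cases x i <;> simp [Sab.ofBool]
    · by_cases hi : i ∈ B <;> simp [sabIn, hi]
    · by_cases hi : i ∈ B
      · simp [sabIn, hi]
      · left; simp [sabIn, hi, flipB]
  have hnstar : ¬ IsSabotaged f Sab.star (sabIn Sab.dagger x B) := by
    intro hst
    obtain ⟨i, hi⟩ := sensBlock_nonempty ⟨h1, h2, h3⟩
    have := hst.1 i
    simp [sabIn, hi] at this
  simp [fsab, hnstar, hsab]

/-- The key per-tree counting lemma: if a deterministic tree distinguishes the
starred and daggered versions of every block with positive weight, then its
weighted cost is at least `(total weight)² / 4`. -/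
lemma tree_bound {n : ℕ} (x : Fin n → Bool) (t : DTree (Fin n) Sab Bool) :
    ∀ (w : Finset (Fin n) → ℝ),
      (∀ B, 0 ≤ w B) →
      (∀ B, w B ≠ 0 →
        t.output (sabIn Sab.star x B) ≠ t.output (sabIn Sab.dagger x B)) →
      (∀ i : Fin n, ∑ B : Finset (Fin n), (if i ∈ B then w B else 0) ≤ 1) →
      (∑ B : Finset (Fin n), w B) ^ 2 / 4 ≤
        ∑ B : Finset (Fin n), w B * ((t.cost (sabIn Sab.star x B) : ℝ)) := by
  induction t with
  | leaf b =>
    intro w hw hsep _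
    have hz : ∀ B : Finset (Fin n), w B = 0 := by
      intro B
      by_contra hB
      exact hsep B hB rfl
    simp [hz]
  | node i next ih =>
    intro w hw hsep hpack
    set W := ∑ B : Finset (Fin n), w B with hW
    set Wi := ∑ B : Finset (Fin n), (if i ∈ B then w B else 0) with hWi
    set w' : Finset (Fin n) → ℝ := fun B => if i ∈ B then 0 else w B with hw'def
    have hw' : ∀ B, 0 ≤ w' B := by
      intro B; simp only [hw'def]
      split <;> [exact le_refl 0; exact hw B]
    have hw'ne : ∀ B, w' B ≠ 0 → i ∉ B ∧ w B ≠ 0 := by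
      intro B hB
      by_cases hi : i ∈ B
      · exfalso; apply hB; simp [hw'def, hi]
      · exact ⟨hi, by simpa [hw'def, hi] using hB⟩
    have hsub : ∀ (s : Sab) (B : Finset (Fin n)), i ∉ B →
        sabIn s x B i = Sab.ofBool (x i) := by
      intro s B hi; simp [sabIn, hi]
    have hsep' : ∀ B, w' B ≠ 0 →
        (next (Sab.ofBool (x i))).output (sabIn Sab.star x B) ≠
        (next (Sab.ofBool (x i))).output (sabIn Sab.dagger x B) := by
      intro B hB
      obtain ⟨hi, hwB⟩ := hw'ne B hB
      have := hsep B hwB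
      simpa [DTree.output, hsub Sab.star B hi, hsub Sab.dagger B hi] using this
    have hpack' : ∀ j : Fin n,
        ∑ B : Finset (Fin n), (if j ∈ B then w' B else 0) ≤ 1 := by
      intro j
      refine le_trans (Finset.sum_le_sum fun B _ => ?_) (hpack j)
      by_cases hj : j ∈ B
      · simp only [hj, if_true, hw'def]
        split <;> [exact hw B; exact le_refl _]
      · simp [hj]
    have hIH := ih (Sab.ofBool (x i)) w' hw' hsep' hpack'
    have hsum' : ∑ B : Finset (Fin n), w' B = W - Wi := by
      rw [hW, hWi, ← Finset.sum_sub_distrib]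
      refine Finset.sum_congr rfl fun B _ => ?_
      by_cases hi : i ∈ B <;> simp [hw'def, hi]
    have hWi1 : Wi ≤ 1 := hpack i
    have hWi0 : 0 ≤ Wi := by
      rw [hWi]
      refine Finset.sum_nonneg fun B _ => ?_
      split <;> [exact hw B; exact le_refl 0]
    have hWiW : Wi ≤ W := by
      rw [hWi, hW]
      refine Finset.sum_le_sum fun B _ => ?_
      split <;> [exact le_refl _; exact hw B]
    have hW0 : 0 ≤ W := le_trans hWi0 hWiW
    -- cost expansion
    have hcost : ∑ B : Finset (Fin n), w B * ((DTree.node i next).cost (sabIn Sab.star x B) : ℝ)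
        = (∑ B : Finset (Fin n),
            w B * ((next (sabIn Sab.star x B i)).cost (sabIn Sab.star x B) : ℝ)) + W := by
      rw [hW, ← Finset.sum_add_distrib]
      refine Finset.sum_congr rfl fun B _ => ?_
      simp only [DTree.cost]
      push_cast
      ring
    have hstep : ∑ B : Finset (Fin n),
        w' B * ((next (Sab.ofBool (x i))).cost (sabIn Sab.star x B) : ℝ) ≤
        ∑ B : Finset (Fin n),
        w B * ((next (sabIn Sab.star x B i)).cost (sabIn Sab.star x B) : ℝ) := by
      refine Finset.sum_le_sum fun B _ => ?_
      by_cases hi : i ∈ B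
      · have : w' B = 0 := by simp [hw'def, hi]
        rw [this, zero_mul]
        exact mul_nonneg (hw B) (Nat.cast_nonneg _)
      · rw [hsub Sab.star B hi]
        simp [hw'def, hi]
    rw [hcost]
    rw [hsum'] at hIH
    have hfinal : W ^ 2 / 4 ≤ (W - Wi) ^ 2 / 4 + W := by nlinarith
    calc W ^ 2 / 4 ≤ (W - Wi) ^ 2 / 4 + W := hfinal
      _ ≤ (∑ B : Finset (Fin n),
            w B * ((next (sabIn Sab.star x B i)).cost (sabIn Sab.star x B) : ℝ)) + W := by
          have := le_trans hIH hstep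
          linarith

/-- Every tree in the support of a zero-error algorithm is correct everywhere. -/
lemma support_correct {ι α β : Type} (A : RandAlg ι α β) (f : PFn ι α β)
    (hA : A.Computes f 0) (ω : A.Ω) (hω : A.p ω ≠ 0) (x : ι → α) (b : β)
    (hx : f x = some b) : (A.tree ω).output x = b := by
  classical
  letI := A.fin
  by_contra hne
  have h1 : (1 : ℝ) ≤ A.succProb x b := by simpa using hA x b hx
  have h2 : A.succProb x b ≤ ∑ ω', (A.p ω' - if ω' = ω then A.p ω else 0) := by
    unfold RandAlg.succProb
    refine Finset.sum_le_sum fun ω' _ => ?_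
    by_cases he : ω' = ω
    · subst he
      simp [hne]
    · simp only [he, if_false, sub_zero]
      split <;> [exact le_refl _; exact A.nonneg ω']
  rw [Finset.sum_sub_distrib, A.sum_one, Finset.sum_ite_eq' Finset.univ ω (fun _ => A.p ω),
    if_pos (Finset.mem_univ ω)] at h2
  have := lt_of_le_of_ne (A.nonneg ω) (Ne.symm hω)
  linarith

lemma RS_nonneg {n : ℕ} (f : PFn (Fin n) Bool Bool) : 0 ≤ RS f := by
  apply Real.sInf_nonneg
  rintro T ⟨hT, -⟩
  exact hT

/-- The set defining `RS f` is nonempty: the trivial query-everything algorithm. -/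
lemma RS_set_nonempty {n : ℕ} (f : PFn (Fin n) Bool Bool) :
    {T : ℝ | 0 ≤ T ∧ ∃ A : RandAlg (Fin n) Sab Bool,
      A.Computes (fsab f) 0 ∧ A.ECostLe (fsab f) T}.Nonempty := by
  classical
  refine ⟨(n : ℝ), Nat.cast_nonneg n, ?_⟩
  set h : (Fin n → Sab) → Bool := fun p => (fsab f p).getD false with hh
  set t : DTree (Fin n) Sab Bool := bigTree h (List.finRange n) (fun _ => Sab.zero) with ht
  have hout : ∀ p : Fin n → Sab, t.output p = h p := by
    intro p
    rw [ht, bigTree_output]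
    congr 1
    funext j
    simp [List.mem_finRange]
  refine ⟨⟨Unit, fun _ => 1, fun _ => zero_le_one, by simp, fun _ => t⟩, ?_, ?_⟩
  · intro p b hp
    unfold RandAlg.succProb
    have hob : t.output p = b := by rw [hout p, hh]; simp [hp]
    simp [hob]
  · intro p _
    unfold RandAlg.expCost
    simp only
    rw [ht, bigTree_cost]
    simp

/-- **Randomized sabotage complexity dominates randomized certificate complexity:**
`RS(f) ≥ RC(f)/4` for every partial Boolean function `f`. -/
theorem RS_ge_RC_div_four {n : ℕ} (f : PFn (Fin n) Bool Bool) :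
    RC f / 4 ≤ RS f := by
  classical
  rw [div_le_iff₀ (by norm_num : (0:ℝ) < 4)]
  have hRS0 : 0 ≤ RS f := RS_nonneg f
  have h4 : 0 ≤ RS f * 4 := by linarith
  apply Real.sSup_le _ h4
  rintro W ⟨x, hx, rfl⟩
  apply Real.sSup_le _ h4
  rintro W' ⟨w, hw, hsens, hpack, rfl⟩
  -- show ∑ w ≤ RS f * 4, i.e. (∑ w)/4 ≤ RS f
  set W' := ∑ B : Finset (Fin n), w B with hW'
  have hW'0 : 0 ≤ W' := Finset.sum_nonneg fun B _ => hw B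
  rw [show RS f * 4 = 4 * RS f by ring, ← div_le_iff₀' (by norm_num : (0:ℝ) < 4)]
  unfold RS R0 Rbar
  apply le_csInf (RS_set_nonempty f)
  rintro T ⟨hT0, A, hAcomp, hAcost⟩
  letI := A.fin
  -- per-tree bound
  have htree : ∀ ω : A.Ω, A.p ω ≠ 0 →
      W' ^ 2 / 4 ≤ ∑ B : Finset (Fin n), w B * ((A.tree ω).cost (sabIn Sab.star x B) : ℝ) := by
    intro ω hω
    apply tree_bound x (A.tree ω) w hw _ hpack
    intro B hB
    have hsB := hsens B hB
    have h1 : (A.tree ω).output (sabIn Sab.star x B) = false :=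
      support_correct A (fsab f) hAcomp ω hω _ false (fsab_sabIn_star f x B hsB)
    have h2 : (A.tree ω).output (sabIn Sab.dagger x B) = true :=
      support_correct A (fsab f) hAcomp ω hω _ true (fsab_sabIn_dagger f x B hsB)
    rw [h1, h2]; simp
  -- combine
  have hmain : W' ^ 2 / 4 ≤ W' * T := by
    calc W' ^ 2 / 4 = ∑ ω, A.p ω * (W' ^ 2 / 4) := by
          rw [← Finset.sum_mul, A.sum_one, one_mul]
      _ ≤ ∑ ω, A.p ω * (∑ B : Finset (Fin n),
            w B * ((A.tree ω).cost (sabIn Sab.star x B) : ℝ)) := by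
          refine Finset.sum_le_sum fun ω _ => ?_
          by_cases hω : A.p ω = 0
          · simp [hω]
          · exact mul_le_mul_of_nonneg_left (htree ω hω) (A.nonneg ω)
      _ = ∑ B : Finset (Fin n), w B * A.expCost (sabIn Sab.star x B) := by
          unfold RandAlg.expCost
          simp_rw [Finset.mul_sum]
          rw [Finset.sum_comm]
          refine Finset.sum_congr rfl fun B _ => Finset.sum_congr rfl fun ω _ => by ring
      _ ≤ ∑ B : Finset (Fin n), w B * T := by
          refine Finset.sum_le_sum fun B _ => ?_
          by_cases hB : w B = 0
          · simp [hB]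
          · refine mul_le_mul_of_nonneg_left ?_ (hw B)
            apply hAcost
            rw [fsab_sabIn_star f x B (hsens B hB)]
            simp
      _ = W' * T := by rw [← Finset.sum_mul]
  rcases eq_or_lt_of_le hW'0 with h0 | h0
  · rw [← h0]; simpa using hT0
  · nlinarith
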